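/- Let q ≥ 1, a, b ∈ ℝ with a < b, g ∈ L^q(a,b), τ : (0,∞) → (0,∞) continuous satisfying the structure assumptions of Definition 2 (so that h = h_{q,τ}, H = H_{q,τ} are defined with H' = h). Suppose f ∈ W^{2,1}_loc(a,b) is positive, solves f'' = g τ(f) a.e., and satisfies liminf_{R→b} |f'(R)|^{2q−2} f'(R) H(f(R)) − limsup_{r→a} |f'(r)|^{2q−2} f'(r) H(f(r)) ≤ 0. Then ∫_a^b |f'(x)|^{2q} h(f(x)) dx ≤ (2q−1)^q ∫_a^b |g(x)|^q dx. -/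

import Mathlib

open MeasureTheory Set Filter
open scoped Topology

lemma hasDerivAt_abs_rpow_mul {q : ℝ} (hq : 1 ≤ q) (t : ℝ) :
    HasDerivAt (fun t : ℝ => |t| ^ (2*q-2) * t) ((2*q-1) * |t| ^ (2*q-2)) t := by
  rcases eq_or_lt_of_le hq with hq1 | hq1
  · -- q = 1 : function is identity
    have h0 : (2*q-2) = 0 := by rw [← hq1]; ring
    have h1 : (2*q-1) = 1 := by rw [← hq1]; ring
    simp only [h0, h1, Real.rpow_zero, one_mul, mul_one]
    exact hasDerivAt_id t
  rcases eq_or_ne t 0 with rfl | ht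
  · -- derivative at 0 is 0
    have h2q : (0:ℝ) < 2*q-2 := by linarith
    have h0 : ((2*q-1) * |(0:ℝ)| ^ (2*q-2)) = 0 := by
      rw [abs_zero, Real.zero_rpow (by positivity)]; ring
    rw [h0, hasDerivAt_iff_tendsto_slope]
    have heq : (slope (fun t : ℝ => |t| ^ (2*q-2) * t) 0) =ᶠ[𝓝[≠] (0:ℝ)] fun t => |t| ^ (2*q-2) := by
      filter_upwards [self_mem_nhdsWithin] with x hx
      have hx : x ≠ 0 := hx
      rw [slope_def_field]
      field_simp
      simp
    rw [tendsto_congr' heq]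
    have hc : ContinuousAt (fun x : ℝ => x ^ (2*q-2)) |0| := by
      rw [abs_zero]
      exact Real.continuousAt_rpow_const 0 _ (Or.inr h2q.le)
    have h2 := hc.comp continuous_abs.continuousAt (x := (0:ℝ))
    have h3 : Tendsto (fun t : ℝ => |t| ^ (2*q-2)) (𝓝 0) (𝓝 0) := by
      have := h2.tendsto
      simpa [Function.comp_def, Real.zero_rpow (ne_of_gt h2q)] using this
    exact h3.mono_left nhdsWithin_le_nhds
  · -- t ≠ 0
    have habs : HasDerivAt (fun t : ℝ => |t|) (Real.sign t) t := by
      rcases ht.lt_or_gt with h | h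
      · have h1 : HasDerivAt (fun t : ℝ => -t) (-1) t := (hasDerivAt_id t).neg
        rw [Real.sign_of_neg h]
        refine h1.congr_of_eventuallyEq ?_
        filter_upwards [Iio_mem_nhds h] with x hx
        exact (abs_of_neg hx)
      · rw [Real.sign_of_pos h]
        refine (hasDerivAt_id t).congr_of_eventuallyEq ?_
        filter_upwards [Ioi_mem_nhds h] with x hx
        exact (abs_of_pos hx)
    have habs' : |t| ≠ 0 := abs_ne_zero.mpr ht
    have h1 : HasDerivAt (fun t : ℝ => |t| ^ (2*q-2))
        (Real.sign t * (2*q-2) * |t| ^ (2*q-2-1)) t :=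
      habs.rpow_const (Or.inl habs')
    have h2 := h1.mul (hasDerivAt_id t)
    have key : Real.sign t * (2*q-2) * |t| ^ (2*q-2-1) * t + |t| ^ (2*q-2) * 1
        = (2*q-1) * |t| ^ (2*q-2) := by
      have hsign : Real.sign t * t = |t| := by
        rcases ht.lt_or_gt with h | h
        · rw [Real.sign_of_neg h, abs_of_neg h]; ring
        · rw [Real.sign_of_pos h, abs_of_pos h]; ring
      have hpow : |t| ^ (2*q-2-1) * |t| = |t| ^ (2*q-2) := by
        rw [← Real.rpow_add_one habs']; ring_nf
      calc Real.sign t * (2*q-2) * |t| ^ (2*q-2-1) * t + |t| ^ (2*q-2) * 1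
          = (2*q-2) * (|t| ^ (2*q-2-1) * (Real.sign t * t)) + |t| ^ (2*q-2) := by ring
        _ = (2*q-1) * |t| ^ (2*q-2) := by rw [hsign, hpow]; ring
    have : t.sign * (2 * q - 2) * |t| ^ (2 * q - 2 - 1) * t + |t| ^ (2 * q - 2)
        = (2*q-1) * |t| ^ (2*q-2) := by rw [← key]; ring
    exact h2.congr_deriv key

lemma young_aux {q : ℝ} (hq : 1 ≤ q) {u G c : ℝ} (hu : 0 ≤ u) (hG : 0 ≤ G) (hc : 0 ≤ c) :
    (2*q-1) * u ^ (2*q-2) * c ^ ((q-1)/q) * G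
      ≤ (q-1)/q * (u ^ (2*q) * c) + (2*q-1) ^ q / q * G ^ q := by
  rcases eq_or_lt_of_le hq with hq1 | hq1
  · rw [← hq1]
    norm_num
  · have hq0 : (0:ℝ) < q := by linarith
    have hqm1 : (0:ℝ) < q - 1 := by linarith
    have h2q1 : (0:ℝ) < 2*q-1 := by linarith
    have hconj : q.HolderConjugate (q/(q-1)) := Real.HolderConjugate.conjExponent hq1
    have hb : (0:ℝ) ≤ u ^ (2*q-2) * c ^ ((q-1)/q) :=
      mul_nonneg (Real.rpow_nonneg hu _) (Real.rpow_nonneg hc _)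
    have ha : (0:ℝ) ≤ (2*q-1) * G := by positivity
    have hyoung := Real.young_inequality_of_nonneg ha hb hconj
    have hbq : (u ^ (2*q-2) * c ^ ((q-1)/q)) ^ (q/(q-1)) = u ^ (2*q) * c := by
      rw [Real.mul_rpow (Real.rpow_nonneg hu _) (Real.rpow_nonneg hc _),
        ← Real.rpow_mul hu, ← Real.rpow_mul hc]
      have e1 : (2*q-2) * (q/(q-1)) = 2*q := by field_simp
      have e2 : (q-1)/q * (q/(q-1)) = 1 := by field_simp
      rw [e1, e2, Real.rpow_one]
    have haq : ((2*q-1) * G) ^ q = (2*q-1)^q * G^q :=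
      Real.mul_rpow h2q1.le hG
    rw [hbq, haq] at hyoung
    have e3 : u ^ (2*q) * c / (q/(q-1)) = (q-1)/q * (u^(2*q)*c) := by
      field_simp
    rw [e3] at hyoung
    calc (2*q-1) * u ^ (2*q-2) * c ^ ((q-1)/q) * G
        = (2*q-1) * G * (u ^ (2*q-2) * c ^ ((q-1)/q)) := by ring
      _ ≤ (2*q-1)^q * G^q / q + (q-1)/q * (u^(2*q)*c) := hyoung
      _ = (q-1)/q * (u ^ (2*q) * c) + (2*q-1) ^ q / q * G ^ q := by ring

lemma H_props {q : ℝ} (hq : 1 ≤ q) (τ h H : ℝ → ℝ)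
    (hτpos : ∀ t ∈ Ioi (0 : ℝ), 0 < τ t)
    (hcase1 : q = 1 → ∃ τ' : ℝ → ℝ,
      (∀ t ∈ Ioi (0 : ℝ), HasDerivAt τ (τ' t) t) ∧
      ((∀ t ∈ Ioi (0 : ℝ), 0 < τ' t) ∨ (∀ t ∈ Ioi (0 : ℝ), τ' t < 0)) ∧
      (∀ t ∈ Ioi (0 : ℝ),
        h t = |τ' t| / (τ t) ^ 2 ∧ H t = -(Real.sign (τ' t)) / τ t))
    (hcase2 : 1 < q → ∃ K : ℝ → ℝ,
      (∀ t ∈ Ioi (0 : ℝ), HasDerivAt K (τ t ^ (q / (q - 1))) t) ∧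
      ((∀ t ∈ Ioi (0 : ℝ), 0 < K t) ∨ (∀ t ∈ Ioi (0 : ℝ), K t < 0)) ∧
      (∀ t ∈ Ioi (0 : ℝ),
        h t = (q - 1) ^ q * |K t| ^ (-q) * τ t ^ (q / (q - 1)) ∧
        H t = -(Real.sign (K t)) * (q - 1) ^ (q - 1) * |K t| ^ (1 - q))) :
    ∀ t ∈ Ioi (0:ℝ), HasDerivAt H (h t) t ∧ 0 ≤ h t ∧ τ t * |H t| = h t ^ ((q-1)/q) := by
  rcases eq_or_lt_of_le hq with hq1 | hq1
  · -- q = 1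
    obtain ⟨τ', hτd, hsgn, hform⟩ := hcase1 hq1.symm
    intro t ht
    have hτt := hτpos t ht
    obtain ⟨hh, hH⟩ := hform t ht
    have hexp : (q-1)/q = 0 := by rw [← hq1]; norm_num
    rcases hsgn with hpos | hneg
    · -- τ' > 0 : H = -1/τ on Ioi 0
      have hHeq : ∀ s ∈ Ioi (0:ℝ), H s = -1 / τ s := fun s hs => by
        rw [(hform s hs).2, Real.sign_of_pos (hpos s hs)]
      have hd : HasDerivAt (fun s => -1 / τ s) (τ' t / τ t ^ 2) t := by
        have := ((hasDerivAt_const t (-1:ℝ)).div (hτd t ht) (ne_of_gt hτt))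
        refine this.congr_deriv ?_
        ring
      have hd2 : HasDerivAt H (τ' t / τ t ^ 2) t := by
        refine hd.congr_of_eventuallyEq ?_
        filter_upwards [Ioi_mem_nhds (show (0:ℝ) < t from ht)] with s hs
        exact hHeq s hs
      have hht : h t = τ' t / τ t ^ 2 := by
        rw [hh, abs_of_pos (hpos t ht)]
      refine ⟨by rw [hht]; exact hd2, ?_, ?_⟩
      · rw [hht]; exact div_nonneg (hpos t ht).le (sq_nonneg _)
      · rw [hexp, Real.rpow_zero, hHeq t ht]
        rw [abs_div, abs_neg, abs_one, abs_of_pos hτt]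
        field_simp
    · -- τ' < 0 : H = 1/τ on Ioi 0
      have hHeq : ∀ s ∈ Ioi (0:ℝ), H s = 1 / τ s := fun s hs => by
        rw [(hform s hs).2, Real.sign_of_neg (hneg s hs)]; ring
      have hd : HasDerivAt (fun s => 1 / τ s) (-τ' t / τ t ^ 2) t := by
        have := ((hasDerivAt_const t (1:ℝ)).div (hτd t ht) (ne_of_gt hτt))
        refine this.congr_deriv ?_
        ring
      have hd2 : HasDerivAt H (-τ' t / τ t ^ 2) t := by
        refine hd.congr_of_eventuallyEq ?_
        filter_upwards [Ioi_mem_nhds (show (0:ℝ) < t from ht)] with s hs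
        exact hHeq s hs
      have hht : h t = -τ' t / τ t ^ 2 := by
        rw [hh, abs_of_neg (hneg t ht)]
      refine ⟨by rw [hht]; exact hd2, ?_, ?_⟩
      · rw [hht]
        have hn : (0:ℝ) ≤ -τ' t := by linarith [hneg t ht]
        exact div_nonneg hn (sq_nonneg _)
      · rw [hexp, Real.rpow_zero, hHeq t ht]
        rw [abs_div, abs_one, abs_of_pos hτt]
        field_simp
  · -- q > 1
    obtain ⟨K, hKd, hsgn, hform⟩ := hcase2 hq1
    intro t ht
    have hτt := hτpos t ht
    have hqm1 : (0:ℝ) < q - 1 := by linarith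
    obtain ⟨hh, hH⟩ := hform t ht
    have hτp : (0:ℝ) < τ t ^ (q/(q-1)) := Real.rpow_pos_of_pos hτt _
    rcases hsgn with hpos | hneg
    · have hKt := hpos t ht
      have hHeq : ∀ s ∈ Ioi (0:ℝ), H s = -((q-1)^(q-1)) * K s ^ (1-q) := fun s hs => by
        rw [(hform s hs).2, Real.sign_of_pos (hpos s hs), abs_of_pos (hpos s hs)]; ring
      have hd : HasDerivAt (fun s => -((q-1):ℝ)^(q-1) * K s ^ (1-q))
          (-((q-1):ℝ)^(q-1) * (τ t ^ (q/(q-1)) * (1-q) * K t ^ (1-q-1))) t :=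
        ((hKd t ht).rpow_const (Or.inl (ne_of_gt hKt))).const_mul _
      have hval : -((q-1):ℝ)^(q-1) * (τ t ^ (q/(q-1)) * (1-q) * K t ^ (1-q-1)) = h t := by
        rw [hh, abs_of_pos hKt]
        have e1 : (1-q-1 : ℝ) = -q := by ring
        have e2 : ((q-1):ℝ)^(q-1) * (q-1) = (q-1)^q := by
          rw [← Real.rpow_add_one (ne_of_gt hqm1)]; ring_nf
        rw [e1]
        calc -((q-1):ℝ)^(q-1) * (τ t ^ (q/(q-1)) * (1-q) * K t ^ (-q))
            = ((q-1):ℝ)^(q-1) * (q-1) * K t ^ (-q) * τ t ^ (q/(q-1)) := by ring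
          _ = (q-1)^q * K t ^ (-q) * τ t ^ (q/(q-1)) := by rw [e2]
      have hd2 : HasDerivAt H (h t) t := by
        rw [← hval]
        refine hd.congr_of_eventuallyEq ?_
        filter_upwards [Ioi_mem_nhds (show (0:ℝ) < t from ht)] with s hs
        exact hHeq s hs
      refine ⟨hd2, ?_, ?_⟩
      · rw [hh]
        have h1 : (0:ℝ) ≤ ((q-1):ℝ)^q := Real.rpow_nonneg hqm1.le _
        have h2 : (0:ℝ) ≤ |K t| ^ (-q) := Real.rpow_nonneg (abs_nonneg _) _
        positivity
      · -- τ t * |H t| = h t ^ ((q-1)/q)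
        rw [hh, hHeq t ht, abs_of_pos hKt]
        have hKp : (0:ℝ) < K t ^ (1-q) := Real.rpow_pos_of_pos hKt _
        have habs : |(-((q-1):ℝ)^(q-1) * K t ^ (1-q))| = ((q-1):ℝ)^(q-1) * K t ^ (1-q) := by
          rw [abs_mul, abs_neg, abs_of_nonneg (Real.rpow_nonneg hqm1.le _),
            abs_of_pos hKp]
        rw [habs]
        rw [Real.mul_rpow (by positivity) (le_of_lt hτp),
          Real.mul_rpow (Real.rpow_nonneg hqm1.le _) (Real.rpow_nonneg (le_of_lt hKt) _),
          ← Real.rpow_mul hqm1.le, ← Real.rpow_mul (le_of_lt hKt), ← Real.rpow_mul hτt.le]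
        have e1 : q * ((q-1)/q) = q - 1 := by field_simp
        have e2 : -q * ((q-1)/q) = 1 - q := by field_simp; ring
        have e3 : q/(q-1) * ((q-1)/q) = 1 := by field_simp
        rw [e1, e2, e3, Real.rpow_one]
        ring
    · have hKt := hneg t ht
      have hKtpos : (0:ℝ) < -K t := by linarith
      have hHeq : ∀ s ∈ Ioi (0:ℝ), H s = ((q-1):ℝ)^(q-1) * (-K s) ^ (1-q) := fun s hs => by
        rw [(hform s hs).2, Real.sign_of_neg (hneg s hs), abs_of_neg (hneg s hs)]; ring
      have hd : HasDerivAt (fun s => ((q-1):ℝ)^(q-1) * (-K s) ^ (1-q))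
          (((q-1):ℝ)^(q-1) * (-(τ t ^ (q/(q-1))) * (1-q) * (-K t) ^ (1-q-1))) t :=
        (((hKd t ht).neg).rpow_const (Or.inl (ne_of_gt hKtpos))).const_mul _
      have hval : ((q-1):ℝ)^(q-1) * (-(τ t ^ (q/(q-1))) * (1-q) * (-K t) ^ (1-q-1)) = h t := by
        rw [hh, abs_of_neg hKt]
        have e1 : (1-q-1 : ℝ) = -q := by ring
        have e2 : ((q-1):ℝ)^(q-1) * (q-1) = (q-1)^q := by
          rw [← Real.rpow_add_one (ne_of_gt hqm1)]; ring_nf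
        rw [e1]
        calc ((q-1):ℝ)^(q-1) * (-(τ t ^ (q/(q-1))) * (1-q) * (-K t) ^ (-q))
            = ((q-1):ℝ)^(q-1) * (q-1) * (-K t) ^ (-q) * τ t ^ (q/(q-1)) := by ring
          _ = (q-1)^q * (-K t) ^ (-q) * τ t ^ (q/(q-1)) := by rw [e2]
      have hd2 : HasDerivAt H (h t) t := by
        rw [← hval]
        refine hd.congr_of_eventuallyEq ?_
        filter_upwards [Ioi_mem_nhds (show (0:ℝ) < t from ht)] with s hs
        exact hHeq s hs
      refine ⟨hd2, ?_, ?_⟩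
      · rw [hh]
        have h1 : (0:ℝ) ≤ ((q-1):ℝ)^q := Real.rpow_nonneg hqm1.le _
        have h2 : (0:ℝ) ≤ |K t| ^ (-q) := Real.rpow_nonneg (abs_nonneg _) _
        positivity
      · rw [hh, hHeq t ht, abs_of_neg hKt]
        have hKp : (0:ℝ) < (-K t) ^ (1-q) := Real.rpow_pos_of_pos hKtpos _
        have habs : |((q-1):ℝ)^(q-1) * (-K t) ^ (1-q)| = ((q-1):ℝ)^(q-1) * (-K t) ^ (1-q) := by
          rw [abs_mul, abs_of_nonneg (Real.rpow_nonneg hqm1.le _), abs_of_pos hKp]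
        rw [habs]
        rw [Real.mul_rpow (by positivity) (le_of_lt hτp),
          Real.mul_rpow (Real.rpow_nonneg hqm1.le _) (Real.rpow_nonneg (le_of_lt hKtpos) _),
          ← Real.rpow_mul hqm1.le, ← Real.rpow_mul (le_of_lt hKtpos), ← Real.rpow_mul hτt.le]
        have e1 : q * ((q-1)/q) = q - 1 := by field_simp
        have e2 : -q * ((q-1)/q) = 1 - q := by field_simp; ring
        have e3 : q/(q-1) * ((q-1)/q) = 1 := by field_simp
        rw [e1, e2, e3, Real.rpow_one]
        ring

lemma abs_rpow_mul_self {q : ℝ} (hq : 1 ≤ q) (t : ℝ) :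
    |t| ^ (2*q-2) * t * t = |t| ^ (2*q) := by
  rcases eq_or_ne t 0 with rfl | ht
  · rw [abs_zero, Real.zero_rpow (by positivity : (2*q:ℝ) ≠ 0)]
    ring
  · have h1 : t * t = |t| * |t| := by
      rcases abs_choice t with h | h <;> rw [h] <;> ring
    have habs : |t| ≠ 0 := abs_ne_zero.mpr ht
    calc |t| ^ (2*q-2) * t * t = |t| ^ (2*q-2) * |t| * |t| := by rw [mul_assoc, h1, mul_assoc]
      _ = |t| ^ (2*q-2+1) * |t| := by rw [Real.rpow_add_one habs]
      _ = |t| ^ (2*q-2+1+1) := (Real.rpow_add_one habs _).symm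
      _ = |t| ^ (2*q) := by ring_nf
lemma continuous_abs_rpow {c : ℝ} (hc : 0 ≤ c) : Continuous fun t : ℝ => |t| ^ c := by
  rw [continuous_iff_continuousAt]
  intro x
  exact (Real.continuousAt_rpow_const _ _ (Or.inr hc)).comp continuous_abs.continuousAt

theorem eigenvalue_gradient_estimate
    (q : ℝ) (hq : 1 ≤ q)
    (a b : ℝ) (hab : a < b)
    (g : ℝ → ℝ) (hg : IntegrableOn (fun x => |g x| ^ q) (Ioo a b))
    (τ h H : ℝ → ℝ)
    (hτc : ContinuousOn τ (Ioi 0)) (hτpos : ∀ t ∈ Ioi (0 : ℝ), 0 < τ t)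
    (hcase1 : q = 1 → ∃ τ' : ℝ → ℝ,
      (∀ t ∈ Ioi (0 : ℝ), HasDerivAt τ (τ' t) t) ∧
      ((∀ t ∈ Ioi (0 : ℝ), 0 < τ' t) ∨ (∀ t ∈ Ioi (0 : ℝ), τ' t < 0)) ∧
      (∀ t ∈ Ioi (0 : ℝ),
        h t = |τ' t| / (τ t) ^ 2 ∧ H t = -(Real.sign (τ' t)) / τ t))
    (hcase2 : 1 < q → ∃ K : ℝ → ℝ,
      (∀ t ∈ Ioi (0 : ℝ), HasDerivAt K (τ t ^ (q / (q - 1))) t) ∧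
      ((∀ t ∈ Ioi (0 : ℝ), 0 < K t) ∨ (∀ t ∈ Ioi (0 : ℝ), K t < 0)) ∧
      (∀ t ∈ Ioi (0 : ℝ),
        h t = (q - 1) ^ q * |K t| ^ (-q) * τ t ^ (q / (q - 1)) ∧
        H t = -(Real.sign (K t)) * (q - 1) ^ (q - 1) * |K t| ^ (1 - q)))
    (f : ℝ → ℝ)
    (hfd : ∀ x ∈ Ioo a b, DifferentiableAt ℝ f x)
    (hfd' : ∀ x ∈ Ioo a b, DifferentiableAt ℝ (deriv f) x)
    (hf'' : LocallyIntegrableOn (deriv (deriv f)) (Ioo a b))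
    (hpos : ∀ x ∈ Ioo a b, 0 < f x)
    (hode : ∀ᵐ x, x ∈ Ioo a b → deriv (deriv f) x = g x * τ (f x))
    (hbdry :
      liminf (fun R => |deriv f R| ^ (2 * q - 2) * deriv f R * H (f R)) (nhdsWithin b (Iio b)) -
        limsup (fun r => |deriv f r| ^ (2 * q - 2) * deriv f r * H (f r)) (nhdsWithin a (Ioi a))
        ≤ 0) :
    ∫ x in Ioo a b, |deriv f x| ^ (2 * q) * h (f x) ≤
      (2 * q - 1) ^ q * ∫ x in Ioo a b, |g x| ^ q := by
  have hq0 : (0:ℝ) < q := lt_of_lt_of_le one_pos hq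
  have h2q1 : (0:ℝ) < 2*q-1 := by linarith
  have hgnn : 0 ≤ ∫ x in Ioo a b, |g x| ^ q :=
    setIntegral_nonneg measurableSet_Ioo (fun x _ => Real.rpow_nonneg (abs_nonneg _) _)
  have hRHS : 0 ≤ (2*q-1)^q * ∫ x in Ioo a b, |g x|^q :=
    mul_nonneg (Real.rpow_nonneg h2q1.le _) hgnn
  set F1 : ℝ → ℝ := fun x => |deriv f x| ^ (2*q) * h (f x) with hF1def
  by_cases hFi : IntegrableOn F1 (Ioo a b)
  swap
  · rw [show (∫ x in Ioo a b, |deriv f x| ^ (2*q) * h (f x)) = ∫ x in Ioo a b, F1 x from rfl,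
      integral_undef hFi]
    convert hRHS using 2 <;> ring_nf
  -- main case
  have hHp := H_props hq τ h H hτpos hcase1 hcase2
  set φ : ℝ → ℝ := fun x => |deriv f x| ^ (2*q-2) * deriv f x * H (f x) with hφdef
  set T1 : ℝ → ℝ := fun x => (2*q-1) * |deriv f x| ^ (2*q-2) * H (f x) * deriv (deriv f) x
    with hT1def
  set D : ℝ → ℝ := fun x => T1 x + F1 x with hDdef
  have hf'c : ContinuousOn (deriv f) (Ioo a b) :=
    fun x hx => (hfd' x hx).continuousAt.continuousWithinAt
  have hfc : ContinuousOn f (Ioo a b) :=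
    fun x hx => (hfd x hx).continuousAt.continuousWithinAt
  have hHfc : ContinuousOn (fun x => H (f x)) (Ioo a b) := fun x hx =>
    (((hHp (f x) (hpos x hx)).1.continuousAt).comp (hfd x hx).continuousAt).continuousWithinAt
  have hq22 : (0:ℝ) ≤ 2*q-2 := by linarith
  have hA2c : ContinuousOn (fun x => |deriv f x| ^ (2*q-2)) (Ioo a b) :=
    (continuous_abs_rpow hq22).comp_continuousOn hf'c
  have hCc : ContinuousOn (fun x => (2*q-1) * |deriv f x| ^ (2*q-2) * H (f x)) (Ioo a b) :=
    ((continuousOn_const.mul hA2c).mul hHfc)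
  -- derivative of φ
  have hφd : ∀ x ∈ Ioo a b, HasDerivAt φ (D x) x := by
    intro x hx
    have h1 : HasDerivAt (fun y => |deriv f y| ^ (2*q-2) * deriv f y)
        ((2*q-1) * |deriv f x| ^ (2*q-2) * deriv (deriv f) x) x := by
      have := (hasDerivAt_abs_rpow_mul hq (deriv f x)).comp x ((hfd' x hx).hasDerivAt)
      exact this
    have h2 : HasDerivAt (fun y => H (f y)) (h (f x) * deriv f x) x :=
      (hHp (f x) (hpos x hx)).1.comp x ((hfd x hx).hasDerivAt)
    have h3 := h1.mul h2
    have key : (2*q-1) * |deriv f x| ^ (2*q-2) * deriv (deriv f) x * H (f x)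
        + (|deriv f x| ^ (2*q-2) * deriv f x) * (h (f x) * deriv f x) = D x := by
      have hid := abs_rpow_mul_self hq (deriv f x)
      simp only [hDdef, hT1def, hF1def]
      calc (2*q-1) * |deriv f x| ^ (2*q-2) * deriv (deriv f) x * H (f x)
          + (|deriv f x| ^ (2*q-2) * deriv f x) * (h (f x) * deriv f x)
          = (2*q-1) * |deriv f x| ^ (2*q-2) * H (f x) * deriv (deriv f) x
          + (|deriv f x| ^ (2*q-2) * deriv f x * deriv f x) * h (f x) := by ring
        _ = _ := by rw [hid]
    rw [← key]
    exact h3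
  -- pointwise bound
  have hbound : ∀ᵐ x, x ∈ Ioo a b → |T1 x| ≤ (q-1)/q * F1 x + (2*q-1)^q/q * |g x|^q := by
    filter_upwards [hode] with x hodex hx
    have hfx := hpos x hx
    obtain ⟨_, hhnn, hτH⟩ := hHp (f x) hfx
    have hτx := hτpos (f x) hfx
    have habs : |T1 x| = (2*q-1) * |deriv f x| ^ (2*q-2) * (h (f x))^((q-1)/q) * |g x| := by
      simp only [hT1def]
      rw [hodex hx]
      rw [abs_mul, abs_mul, abs_mul, abs_mul]
      rw [abs_of_pos h2q1, abs_of_nonneg (Real.rpow_nonneg (abs_nonneg _) _),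
        abs_of_pos hτx]
      calc (2*q-1) * |deriv f x| ^ (2*q-2) * |H (f x)| * (|g x| * τ (f x))
          = (2*q-1) * |deriv f x| ^ (2*q-2) * (τ (f x) * |H (f x)|) * |g x| := by ring
        _ = _ := by rw [hτH]
    rw [habs]
    have := young_aux hq (abs_nonneg (deriv f x)) (abs_nonneg (g x)) hhnn
    have hF1x : F1 x = |deriv f x| ^ (2*q) * h (f x) := rfl
    rw [hF1x]
    exact this
  -- integrability of T1 and D on Ioo a b
  have hboundInt : IntegrableOn
      (fun x => (q-1)/q * F1 x + (2*q-1)^q/q * |g x|^q) (Ioo a b) :=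
    (hFi.const_mul _).add (hg.const_mul _)
  have hT1meas : AEStronglyMeasurable T1 (volume.restrict (Ioo a b)) := by
    have h1 : AEStronglyMeasurable (fun x => (2*q-1) * |deriv f x| ^ (2*q-2) * H (f x))
        (volume.restrict (Ioo a b)) := hCc.aestronglyMeasurable measurableSet_Ioo
    exact h1.mul (measurable_deriv (deriv f)).aestronglyMeasurable
  have hT1i : IntegrableOn T1 (Ioo a b) := by
    refine Integrable.mono' hboundInt hT1meas ?_
    filter_upwards [ae_restrict_mem measurableSet_Ioo, ae_restrict_of_ae hbound] with x hx hb
    simpa [Real.norm_eq_abs] using hb hx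
  have hDi : IntegrableOn D (Ioo a b) := hT1i.add hFi
  -- FTC
  have hFTC : ∀ r R, r ∈ Ioo a b → R ∈ Ioo a b → ∫ t in r..R, D t = φ R - φ r := by
    intro r R hr hR
    refine intervalIntegral.integral_eq_sub_of_hasDerivAt ?_ ?_
    · intro x hx
      exact hφd x (Set.ordConnected_Ioo.uIcc_subset hr hR hx)
    · exact (hDi.mono_set (Set.ordConnected_Ioo.uIcc_subset hr hR)).intervalIntegrable
  -- per-interval estimate
  have hmain : ∀ r R, r ∈ Ioo a b → R ∈ Ioo a b → r ≤ R →
      ∫ x in Ioo r R, F1 x ≤ q * (φ R - φ r) + (2*q-1)^q * ∫ x in Ioo a b, |g x|^q := by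
    intro r R hr hR hrR
    have hsub : Ioo r R ⊆ Ioo a b := Ioo_subset_Ioo hr.1.le hR.2.le
    have h1 : ∫ x in Ioo r R, D x = φ R - φ r := by
      rw [← integral_Ioc_eq_integral_Ioo, ← intervalIntegral.integral_of_le hrR]
      exact hFTC r R hr hR
    have hT1r : IntegrableOn T1 (Ioo r R) := hT1i.mono_set hsub
    have hF1r : IntegrableOn F1 (Ioo r R) := hFi.mono_set hsub
    have h2 : ∫ x in Ioo r R, D x = (∫ x in Ioo r R, T1 x) + ∫ x in Ioo r R, F1 x :=
      integral_add hT1r hF1r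
    have h3 : -(∫ x in Ioo r R, T1 x) ≤ ∫ x in Ioo r R, |T1 x| := by
      have := norm_integral_le_integral_norm (μ := volume.restrict (Ioo r R)) T1
      simp only [Real.norm_eq_abs] at this
      calc -(∫ x in Ioo r R, T1 x) ≤ |∫ x in Ioo r R, T1 x| := neg_le_abs _
        _ ≤ _ := this
    have h4 : ∫ x in Ioo r R, |T1 x|
        ≤ ∫ x in Ioo r R, ((q-1)/q * F1 x + (2*q-1)^q/q * |g x|^q) := by
      refine integral_mono_ae hT1r.abs (hboundInt.mono_set hsub) ?_
      filter_upwards [ae_restrict_mem measurableSet_Ioo, ae_restrict_of_ae hbound] with x hx hb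
      exact hb (hsub hx)
    have h5 : ∫ x in Ioo r R, ((q-1)/q * F1 x + (2*q-1)^q/q * |g x|^q)
        = (q-1)/q * (∫ x in Ioo r R, F1 x) + (2*q-1)^q/q * ∫ x in Ioo r R, |g x|^q := by
      rw [integral_add (hFi.mono_set hsub |>.const_mul _) ((hg.mono_set hsub).const_mul _),
        integral_const_mul, integral_const_mul]
    have h6 : ∫ x in Ioo r R, |g x|^q ≤ ∫ x in Ioo a b, |g x|^q := by
      refine setIntegral_mono_set hg ?_ (HasSubset.Subset.eventuallyLE hsub)
      filter_upwards with x
      exact Real.rpow_nonneg (abs_nonneg _) _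
    -- combine
    have h7 : ∫ x in Ioo r R, F1 x ≤ (φ R - φ r) + ((q-1)/q * (∫ x in Ioo r R, F1 x)
        + (2*q-1)^q/q * ∫ x in Ioo a b, |g x|^q) := by
      have e := h1 ▸ h2
      have h8 : (2*q-1)^q/q * ∫ x in Ioo r R, |g x|^q
          ≤ (2*q-1)^q/q * ∫ x in Ioo a b, |g x|^q :=
        mul_le_mul_of_nonneg_left h6 (by positivity)
      nlinarith [h3, h4, h5]
    set I := ∫ x in Ioo r R, F1 x
    set X := φ R - φ r
    set J := ∫ x in Ioo a b, |g x|^q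
    have h9 := mul_le_mul_of_nonneg_left h7 hq0.le
    have h10 : q * (X + ((q-1)/q*I + (2*q-1)^q/q*J)) = q*X + (q-1)*I + (2*q-1)^q*J := by
      field_simp
      ring
    rw [h10] at h9
    linarith
  -- primitive and limits
  set c0 := (a+b)/2 with hc0def
  have hc0 : c0 ∈ Ioo a b := ⟨by simp only [hc0def]; linarith, by simp only [hc0def]; linarith⟩
  set P : ℝ → ℝ := fun x => ∫ t in c0..x, D t with hPdef
  have hφP : ∀ x ∈ Ioo a b, φ x = φ c0 + P x := by
    intro x hx
    have h1 := hFTC c0 x hc0 hx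
    simp only [hPdef]
    linarith [h1]
  have hDIccb : IntegrableOn D (Icc c0 b) := by
    rw [integrableOn_Icc_iff_integrableOn_Ioo]
    exact hDi.mono_set (Ioo_subset_Ioo hc0.1.le le_rfl)
  have hPcontb : ContinuousOn P (Icc c0 b) := by
    have h1 := intervalIntegral.continuousOn_primitive_interval
      (a := c0) (b := b) (f := D) (μ := volume)
      (by rw [uIcc_of_le hc0.2.le]; exact hDIccb)
    rwa [uIcc_of_le hc0.2.le] at h1
  have hPb : Tendsto P (𝓝[<] b) (𝓝 (P b)) := by
    have h1 : ContinuousWithinAt P (Icc c0 b) b := hPcontb b (right_mem_Icc.mpr hc0.2.le)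
    have h2 : 𝓝[<] b ≤ 𝓝[Icc c0 b] b := by
      rw [← nhdsWithin_Ioo_eq_nhdsLT hc0.2]
      exact nhdsWithin_mono b Ioo_subset_Icc_self
    exact h1.mono_left h2
  have hφb : Tendsto φ (𝓝[<] b) (𝓝 (φ c0 + P b)) := by
    refine Tendsto.congr' ?_ (tendsto_const_nhds.add hPb)
    filter_upwards [Ioo_mem_nhdsLT hc0.2] with x hx
    exact (hφP x (Ioo_subset_Ioo hc0.1.le le_rfl hx)).symm
  have hDIcca : IntegrableOn D (Icc a c0) := by
    rw [integrableOn_Icc_iff_integrableOn_Ioo]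
    exact hDi.mono_set (Ioo_subset_Ioo le_rfl hc0.2.le)
  have hPconta : ContinuousOn P (Icc a c0) := by
    have h1 := intervalIntegral.continuousOn_primitive_interval
      (a := c0) (b := a) (f := D) (μ := volume)
      (by rw [uIcc_comm, uIcc_of_le hc0.1.le]; exact hDIcca)
    rwa [uIcc_comm, uIcc_of_le hc0.1.le] at h1
  have hPa : Tendsto P (𝓝[>] a) (𝓝 (P a)) := by
    have h1 : ContinuousWithinAt P (Icc a c0) a := hPconta a (left_mem_Icc.mpr hc0.1.le)
    have h2 : 𝓝[>] a ≤ 𝓝[Icc a c0] a := by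
      rw [← nhdsWithin_Ioo_eq_nhdsGT hc0.1]
      exact nhdsWithin_mono a Ioo_subset_Icc_self
    exact h1.mono_left h2
  have hφa : Tendsto φ (𝓝[>] a) (𝓝 (φ c0 + P a)) := by
    refine Tendsto.congr' ?_ (tendsto_const_nhds.add hPa)
    filter_upwards [Ioo_mem_nhdsGT hc0.1] with x hx
    exact (hφP x (Ioo_subset_Ioo le_rfl hc0.2.le hx)).symm
  rw [hφb.liminf_eq, hφa.limsup_eq] at hbdry
  -- sequences
  have hba : (0:ℝ) < b - a := by linarith
  set u : ℕ → ℝ := fun n => a + (b-a)/((n:ℝ)+3) with hudef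
  set v : ℕ → ℝ := fun n => b - (b-a)/((n:ℝ)+3) with hvdef
  have hd3 : ∀ n : ℕ, (0:ℝ) < (n:ℝ)+3 := fun n => by positivity
  have hdpos : ∀ n : ℕ, 0 < (b-a)/((n:ℝ)+3) := fun n => div_pos hba (hd3 n)
  have hdle : ∀ n : ℕ, (b-a)/((n:ℝ)+3) ≤ (b-a)/3 := by
    intro n
    rw [div_le_div_iff₀ (hd3 n) (by norm_num)]
    nlinarith [mul_nonneg hba.le (Nat.cast_nonneg (α := ℝ) n)]
  have hdlt : ∀ n : ℕ, (b-a)/((n:ℝ)+3) < b-a := fun n =>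
    div_lt_self hba (by linarith [Nat.cast_nonneg (α := ℝ) n])
  have hu_mem : ∀ n, u n ∈ Ioo a b := fun n =>
    ⟨by simp only [hudef]; linarith [hdpos n], by simp only [hudef]; linarith [hdlt n]⟩
  have hv_mem : ∀ n, v n ∈ Ioo a b := fun n =>
    ⟨by simp only [hvdef]; linarith [hdlt n], by simp only [hvdef]; linarith [hdpos n]⟩
  have huv : ∀ n, u n ≤ v n := fun n => by
    simp only [hudef, hvdef]; linarith [hdle n]
  have hmonoS : Monotone (fun n => Ioo (u n) (v n)) := by
    intro m n hmn
    have hc : ((m:ℝ)+3) ≤ ((n:ℝ)+3) := by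
      have : (m:ℝ) ≤ (n:ℝ) := Nat.cast_le.mpr hmn
      linarith
    have hdd : (b-a)/((n:ℝ)+3) ≤ (b-a)/((m:ℝ)+3) := by
      rw [div_le_div_iff₀ (hd3 n) (hd3 m)]
      nlinarith [mul_le_mul_of_nonneg_left hc hba.le]
    apply Ioo_subset_Ioo
    · simp only [hudef]; linarith
    · simp only [hvdef]; linarith
  have hUnion : (⋃ n, Ioo (u n) (v n)) = Ioo a b := by
    apply Subset.antisymm
    · exact iUnion_subset fun n => Ioo_subset_Ioo (hu_mem n).1.le (hv_mem n).2.le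
    · intro x hx
      have hε : 0 < min (x - a) (b - x) := lt_min (by linarith [hx.1]) (by linarith [hx.2])
      obtain ⟨n, hn⟩ := exists_nat_gt ((b-a)/min (x-a) (b-x))
      have h0 : (b-a)/min (x-a) (b-x) < (n:ℝ)+3 := by linarith
      have h1 : b - a < min (x-a) (b-x) * ((n:ℝ)+3) := by
        have := (div_lt_iff₀ hε).mp h0
        linarith
      have hlt : (b-a)/((n:ℝ)+3) < min (x-a) (b-x) := by
        rw [div_lt_iff₀ (hd3 n)]
        linarith
      refine mem_iUnion.mpr ⟨n, ?_, ?_⟩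
      · simp only [hudef]
        have := min_le_left (x-a) (b-x)
        linarith
      · simp only [hvdef]
        have := min_le_right (x-a) (b-x)
        linarith
  have hseq : Tendsto (fun n => ∫ x in Ioo (u n) (v n), F1 x) atTop
      (𝓝 (∫ x in Ioo a b, F1 x)) := by
    have h1 := tendsto_setIntegral_of_monotone (fun n : ℕ => measurableSet_Ioo) hmonoS
      (by rw [hUnion]; exact hFi)
    rwa [hUnion] at h1
  have hεt : Tendsto (fun n : ℕ => (b-a)/((n:ℝ)+3)) atTop (𝓝 0) :=
    tendsto_const_nhds.div_atTop
      (tendsto_atTop_add_const_right _ _ tendsto_natCast_atTop_atTop)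
  have hvt : Tendsto v atTop (𝓝[<] b) := by
    refine tendsto_nhdsWithin_of_tendsto_nhds_of_eventually_within _ ?_ ?_
    · have h1 := tendsto_const_nhds (x := b) (f := (atTop : Filter ℕ)) |>.sub hεt
      simpa using h1
    · filter_upwards with n
      exact (hv_mem n).2
  have hut : Tendsto u atTop (𝓝[>] a) := by
    refine tendsto_nhdsWithin_of_tendsto_nhds_of_eventually_within _ ?_ ?_
    · have h1 := tendsto_const_nhds (x := a) (f := (atTop : Filter ℕ)) |>.add hεt
      simpa using h1
    · filter_upwards with n
      exact (hu_mem n).1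
  have hφv := hφb.comp hvt
  have hφu := hφa.comp hut
  have hlim2 : Tendsto
      (fun n => q * (φ (v n) - φ (u n)) + (2*q-1)^q * ∫ x in Ioo a b, |g x|^q) atTop
      (𝓝 (q * ((φ c0 + P b) - (φ c0 + P a)) + (2*q-1)^q * ∫ x in Ioo a b, |g x|^q)) :=
    (((hφv.sub hφu).const_mul q).add_const _)
  have hfin := le_of_tendsto_of_tendsto' hseq hlim2
    (fun n => hmain (u n) (v n) (hu_mem n) (hv_mem n) (huv n))
  have hle0 : q * ((φ c0 + P b) - (φ c0 + P a)) ≤ 0 :=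
    mul_nonpos_iff.mpr (Or.inl ⟨hq0.le, hbdry⟩)
  calc ∫ x in Ioo a b, F1 x
      ≤ q * ((φ c0 + P b) - (φ c0 + P a)) + (2*q-1)^q * ∫ x in Ioo a b, |g x|^q := hfin
    _ ≤ (2*q-1)^q * ∫ x in Ioo a b, |g x|^q := by linarith
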